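/- (Proposition 4.3 of the paper, finite-support form: the reduced R-matrix is expressed through the c-Heisenberg operators alone.) Assume q ∈ F is invertible. Let G(μ,ν) ∈ F be a finitely supported family indexed by pairs of finite multisets of positive integers, and define F(μ,ρ,ν,σ) := (−1)^{ℓ(ρ)+ℓ(σ)} q^{|ρ|+|σ|} G(μ ∪ ρ, ν ∪ σ). Then one has the operator identity on P ⊗_F P: ∑_{μ,ρ,ν,σ} F(μ,ρ,ν,σ) · (a*_μ ∘ a_ν) ⊗ (a*_ρ ∘ a_σ) = ∑_{μ,ν} q^{|μ|+|ν|} G(μ,ν) · c*_μ ∘ c_ν. -/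

import Mathlib

open MvPolynomial

noncomputable section

set_option linter.unusedSectionVars false

variable (F : Type*) [Field F] [CharZero F]

abbrev PP (F : Type*) [Field F] : Type _ := MvPolynomial ℕ+ F

/-- `a_{-r}`: multiplication by `X r`. -/
def aNeg (r : ℕ+) : Module.End F (PP F) := LinearMap.mulLeft F (X r)

/-- `a_r := κ'_r • ∂/∂X_r`. -/
def aPos (κ : ℕ+ → F) (r : ℕ+) : Module.End F (PP F) :=
  κ r • ((pderiv r : Derivation F (PP F) (PP F)) : Module.End F (PP F))

lemma aNeg_commute (i j : ℕ+) : Commute (aNeg F i) (aNeg F j) := by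
  apply LinearMap.ext
  intro p
  simp [aNeg, Module.End.mul_apply, mul_left_comm]

lemma pderiv_commute (i j : ℕ+) :
    Commute ((pderiv i : Derivation F (PP F) (PP F)) : Module.End F (PP F))
      ((pderiv j : Derivation F (PP F) (PP F)) : Module.End F (PP F)) := by
  have h : (⁅(pderiv i : Derivation F (PP F) (PP F)),
      (pderiv j : Derivation F (PP F) (PP F))⁆ : Derivation F (PP F) (PP F)) = 0 := by
    apply derivation_ext
    intro k
    simp only [Derivation.commutator_apply, pderiv_X, Pi.single_apply, Derivation.zero_apply]
    split_ifs <;> simp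
  have h2 : (⁅((pderiv i : Derivation F (PP F) (PP F)) : Module.End F (PP F)),
      ((pderiv j : Derivation F (PP F) (PP F)) : Module.End F (PP F))⁆ : Module.End F (PP F)) = 0 := by
    rw [← Derivation.commutator_coe_linear_map, h]
    rfl
  rw [Ring.lie_def] at h2
  exact sub_eq_zero.mp h2

lemma aPos_commute (κ : ℕ+ → F) (i j : ℕ+) : Commute (aPos F κ i) (aPos F κ j) :=
  ((pderiv_commute F i j).smul_left (κ i)).smul_right (κ j)

/-- Product of a pairwise-commuting family of operators over a multiset. -/
def opProd {M : Type*} [Monoid M] (f : ℕ+ → M) (hf : ∀ i j, Commute (f i) (f j))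
    (μ : Multiset ℕ+) : M :=
  (μ.map f).noncommProd (by
    intro x hx y hy _
    obtain ⟨i, _, rfl⟩ := Multiset.mem_map.mp hx
    obtain ⟨j, _, rfl⟩ := Multiset.mem_map.mp hy
    exact hf i j)

/-- `m(μ)! := ∏_r m_r(μ)!`, the product of factorials of part multiplicities. -/
def mfact (μ : Multiset ℕ+) : ℕ := (μ.dedup.map fun r => (μ.count r).factorial).prod

/-- `|μ|`: the weight (sum of the parts) of `μ`. -/
def msum (μ : Multiset ℕ+) : ℕ := (μ.map fun r => (r : ℕ)).sum

/-- The multiset binomial coefficient `[μ ⫶ ν]`. -/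
def mbinom (μ ν : Multiset ℕ+) : F :=
  if ν ≤ μ then (mfact μ : F) / ((mfact (μ - ν) : F) * (mfact ν : F)) else 0

/-- `a*_μ := (1/m(μ)!) ∏_{r∈μ} a_{-r}`. -/
def aStar (μ : Multiset ℕ+) : Module.End F (PP F) :=
  ((mfact μ : F))⁻¹ • opProd (aNeg F) (aNeg_commute F) μ

/-- `a_μ := (1/m(μ)!) ∏_{r∈μ} a_r`. -/
def aLow (κ : ℕ+ → F) (μ : Multiset ℕ+) : Module.End F (PP F) :=
  ((mfact μ : F))⁻¹ • opProd (aPos F κ) (aPos_commute F κ) μ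

/-- `ξ_λ := (1/m(λ)!) ∏_{r∈λ} κ'_r`. -/
def xiCoef (κ : ℕ+ → F) (lam : Multiset ℕ+) : F :=
  ((mfact lam : F))⁻¹ * (lam.map κ).prod

open scoped TensorProduct

/-- `f ⊗ id` acting on `P ⊗ P`. -/
def op1 (f : Module.End F (PP F)) : Module.End F (PP F ⊗[F] PP F) :=
  TensorProduct.map f LinearMap.id

/-- `id ⊗ g` acting on `P ⊗ P`. -/
def op2 (g : Module.End F (PP F)) : Module.End F (PP F ⊗[F] PP F) :=
  TensorProduct.map LinearMap.id g

lemma op1_mul (f f' : Module.End F (PP F)) : op1 F (f * f') = op1 F f * op1 F f' := by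
  simp only [op1, Module.End.mul_eq_comp, ← TensorProduct.map_comp, LinearMap.comp_id]

lemma op2_mul (g g' : Module.End F (PP F)) : op2 F (g * g') = op2 F g * op2 F g' := by
  simp only [op2, Module.End.mul_eq_comp, ← TensorProduct.map_comp, LinearMap.comp_id]

lemma op1_op2_commute (f g : Module.End F (PP F)) : Commute (op1 F f) (op2 F g) := by
  unfold op1 op2
  rw [Commute, SemiconjBy, Module.End.mul_eq_comp, Module.End.mul_eq_comp,
    ← TensorProduct.map_comp, ← TensorProduct.map_comp]
  simp

lemma op1_commute {f f' : Module.End F (PP F)} (h : Commute f f') :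
    Commute (op1 F f) (op1 F f') := by
  rw [Commute, SemiconjBy, ← op1_mul, ← op1_mul, h.eq]

lemma op2_commute {g g' : Module.End F (PP F)} (h : Commute g g') :
    Commute (op2 F g) (op2 F g') := by
  rw [Commute, SemiconjBy, ← op2_mul, ← op2_mul, h.eq]

variable (q : F)

/-- `b_r := a_r ⊗ id + q^{-r} (id ⊗ a_r)`. -/
def bPos (κ : ℕ+ → F) (r : ℕ+) : Module.End F (PP F ⊗[F] PP F) :=
  op1 F (aPos F κ r) + (q⁻¹) ^ (r : ℕ) • op2 F (aPos F κ r)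

/-- `b_{-r} := a_{-r} ⊗ id + q^{-r} (id ⊗ a_{-r})`. -/
def bNeg (r : ℕ+) : Module.End F (PP F ⊗[F] PP F) :=
  op1 F (aNeg F r) + (q⁻¹) ^ (r : ℕ) • op2 F (aNeg F r)

/-- `c_r := q^{-r} (a_r ⊗ id) - id ⊗ a_r`. -/
def cPos (κ : ℕ+ → F) (r : ℕ+) : Module.End F (PP F ⊗[F] PP F) :=
  (q⁻¹) ^ (r : ℕ) • op1 F (aPos F κ r) - op2 F (aPos F κ r)

/-- `c_{-r} := q^{-r} (a_{-r} ⊗ id) - id ⊗ a_{-r}`. -/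
def cNeg (r : ℕ+) : Module.End F (PP F ⊗[F] PP F) :=
  (q⁻¹) ^ (r : ℕ) • op1 F (aNeg F r) - op2 F (aNeg F r)

lemma commute_aux {A B C D : Module.End F (PP F ⊗[F] PP F)} {x y : F}
    (hAC : Commute A C) (hAD : Commute A D) (hBC : Commute B C) (hBD : Commute B D) :
    Commute (x • A - B) (y • C - D) := by
  have eAC := LinearMap.congr_fun hAC.eq
  have eAD := LinearMap.congr_fun hAD.eq
  have eBC := LinearMap.congr_fun hBC.eq
  have eBD := LinearMap.congr_fun hBD.eq
  simp only [Module.End.mul_apply] at eAC eAD eBC eBD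
  rw [Commute, SemiconjBy]
  apply LinearMap.ext
  intro v
  simp only [Module.End.mul_apply, LinearMap.sub_apply, LinearMap.smul_apply, map_sub, map_smul,
    eAC, eAD, eBC, eBD]
  simp only [smul_sub, smul_comm y x]
  abel

lemma cNeg_commute (i j : ℕ+) : Commute (cNeg F q i) (cNeg F q j) := by
  unfold cNeg
  exact commute_aux F (op1_commute F (aNeg_commute F i j))
    (op1_op2_commute F (aNeg F i) (aNeg F j)) (op1_op2_commute F (aNeg F j) (aNeg F i)).symm
    (op2_commute F (aNeg_commute F i j))

lemma cPos_commute (κ : ℕ+ → F) (i j : ℕ+) : Commute (cPos F q κ i) (cPos F q κ j) := by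
  unfold cPos
  exact commute_aux F (op1_commute F (aPos_commute F κ i j))
    (op1_op2_commute F (aPos F κ i) (aPos F κ j))
    (op1_op2_commute F (aPos F κ j) (aPos F κ i)).symm
    (op2_commute F (aPos_commute F κ i j))

/-- `c*_μ := (1/m(μ)!) ∏_{r∈μ} c_{-r}`. -/
def cStar (μ : Multiset ℕ+) : Module.End F (PP F ⊗[F] PP F) :=
  ((mfact μ : F))⁻¹ • opProd (cNeg F q) (cNeg_commute F q) μ

/-- `c_μ := (1/m(μ)!) ∏_{r∈μ} c_r`. -/
def cLow (κ : ℕ+ → F) (μ : Multiset ℕ+) : Module.End F (PP F ⊗[F] PP F) :=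
  ((mfact μ : F))⁻¹ • opProd (cPos F q κ) (cPos_commute F q κ) μ

/-! ### Auxiliary lemmas -/

lemma opProd_zero {M : Type*} [Monoid M] (f : ℕ+ → M) (hf : ∀ i j, Commute (f i) (f j)) :
    opProd f hf 0 = 1 := rfl

lemma opProd_cons {M : Type*} [Monoid M] (f : ℕ+ → M) (hf : ∀ i j, Commute (f i) (f j))
    (a : ℕ+) (μ : Multiset ℕ+) :
    opProd f hf (a ::ₘ μ) = f a * opProd f hf μ := by
  simp [opProd, Multiset.noncommProd_cons]

lemma commute_opProd {M : Type*} [Monoid M] (f : ℕ+ → M) (hf : ∀ i j, Commute (f i) (f j))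
    (y : M) (h : ∀ i, Commute y (f i)) (μ : Multiset ℕ+) :
    Commute y (opProd f hf μ) := by
  apply Multiset.noncommProd_commute
  intro x hx
  obtain ⟨i, _, rfl⟩ := Multiset.mem_map.mp hx
  exact h i

lemma opProd_congr {M : Type*} [Monoid M] (f g : ℕ+ → M) (h : ∀ r, f r = g r)
    (hf : ∀ i j, Commute (f i) (f j)) (hg : ∀ i j, Commute (g i) (g j)) (μ : Multiset ℕ+) :
    opProd f hf μ = opProd g hg μ := by
  have : f = g := funext h
  subst this
  rfl

lemma opProd_add {M : Type*} [Semiring M] (f g : ℕ+ → M)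
    (hff : ∀ i j, Commute (f i) (f j)) (hgg : ∀ i j, Commute (g i) (g j))
    (hfg : ∀ i j, Commute (f i) (g j))
    (hsum : ∀ i j, Commute (f i + g i) (f j + g j)) (α : Multiset ℕ+) :
    opProd (fun r => f r + g r) hsum α =
      (α.powerset.map fun ν => opProd f hff ν * opProd g hgg (α - ν)).sum := by
  induction α using Multiset.induction with
  | empty =>
    rw [Multiset.powerset_zero]
    simp only [Multiset.map_singleton, Multiset.sum_singleton, Multiset.sub_zero]
    rw [opProd_zero, opProd_zero, opProd_zero, one_mul]
  | cons a s IH =>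
    rw [opProd_cons _ _ a s, IH, add_mul, add_comm, Multiset.powerset_cons, Multiset.map_add,
      Multiset.sum_add, Multiset.map_map]
    congr 1
    · -- g a part matches the untouched powerset part
      rw [← Multiset.sum_map_mul_left]
      apply congrArg Multiset.sum
      apply Multiset.map_congr rfl
      intro ν hν
      have hνs : ν ≤ s := Multiset.mem_powerset.mp hν
      rw [Multiset.cons_sub_of_le a hνs, opProd_cons, ← mul_assoc,
        ((commute_opProd f hff (g a) (fun i => (hfg i a).symm) ν).eq), mul_assoc]
    · -- f a part matches the mapped powerset part
      rw [← Multiset.sum_map_mul_left]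
      apply congrArg Multiset.sum
      apply Multiset.map_congr rfl
      intro ν hν
      simp only [Function.comp_apply]
      rw [opProd_cons, Multiset.sub_cons, Multiset.erase_cons_head, mul_assoc]

lemma opProd_smul {S M : Type*} [CommMonoid S] [Monoid M] [MulAction S M]
    [IsScalarTower S M M] [SMulCommClass S M M]
    (c : ℕ+ → S) (f : ℕ+ → M) (hf : ∀ i j, Commute (f i) (f j))
    (hcf : ∀ i j, Commute (c i • f i) (c j • f j)) (μ : Multiset ℕ+) :
    opProd (fun r => c r • f r) hcf μ = (μ.map c).prod • opProd f hf μ := by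
  induction μ using Multiset.induction with
  | empty => simp [opProd_zero]
  | cons a s IH =>
    rw [opProd_cons _ _ a s, opProd_cons _ _ a s, IH, Multiset.map_cons, Multiset.prod_cons,
      smul_mul_smul_comm]

lemma op1_one : op1 F 1 = 1 := by
  unfold op1
  rw [Module.End.one_eq_id, TensorProduct.map_id]
  rfl

lemma op2_one : op2 F 1 = 1 := by
  unfold op2
  rw [Module.End.one_eq_id, TensorProduct.map_id]
  rfl

lemma op1_opProd (f : ℕ+ → Module.End F (PP F)) (hf : ∀ i j, Commute (f i) (f j))
    (μ : Multiset ℕ+) :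
    op1 F (opProd f hf μ) =
      opProd (fun r => op1 F (f r)) (fun i j => op1_commute F (hf i j)) μ := by
  induction μ using Multiset.induction with
  | empty => rw [opProd_zero, opProd_zero, op1_one]
  | cons a s IH => rw [opProd_cons, opProd_cons, op1_mul, IH]

lemma op2_opProd (f : ℕ+ → Module.End F (PP F)) (hf : ∀ i j, Commute (f i) (f j))
    (μ : Multiset ℕ+) :
    op2 F (opProd f hf μ) =
      opProd (fun r => op2 F (f r)) (fun i j => op2_commute F (hf i j)) μ := by
  induction μ using Multiset.induction with
  | empty => rw [opProd_zero, opProd_zero, op2_one]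
  | cons a s IH => rw [opProd_cons, opProd_cons, op2_mul, IH]

lemma op1_smul (x : F) (f : Module.End F (PP F)) : op1 F (x • f) = x • op1 F f :=
  TensorProduct.map_smul_left x f _

lemma op2_smul (x : F) (f : Module.End F (PP F)) : op2 F (x • f) = x • op2 F f :=
  TensorProduct.map_smul_right x _ f

lemma op1_mul_op2 (A B : Module.End F (PP F)) :
    op1 F A * op2 F B = TensorProduct.map A B := by
  unfold op1 op2
  rw [Module.End.mul_eq_comp, ← TensorProduct.map_comp]
  simp

lemma msum_cons (a : ℕ+) (s : Multiset ℕ+) : msum (a ::ₘ s) = (a : ℕ) + msum s := by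
  simp [msum]

lemma prod_map_pow (μ : Multiset ℕ+) :
    (μ.map fun r : ℕ+ => q ^ (r : ℕ)).prod = q ^ msum μ := by
  induction μ using Multiset.induction with
  | empty => simp [msum]
  | cons a s IH =>
    rw [Multiset.map_cons, Multiset.prod_cons, IH, msum_cons, pow_add]

lemma prod_map_neg_pow (μ : Multiset ℕ+) :
    (μ.map fun r : ℕ+ => -(q ^ (r : ℕ))).prod = (-1 : F) ^ Multiset.card μ * q ^ msum μ := by
  induction μ using Multiset.induction with
  | empty => simp [msum]
  | cons a s IH =>
    rw [Multiset.map_cons, Multiset.prod_cons, IH, Multiset.card_cons, msum_cons, pow_add,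
      pow_succ]
    ring

lemma mfact_eq_prod (μ : Multiset ℕ+) (T : Finset ℕ+) (h : μ.toFinset ⊆ T) :
    mfact μ = ∏ r ∈ T, (μ.count r).factorial := by
  rw [mfact]
  have : (μ.dedup.map fun r => (μ.count r).factorial).prod
      = ∏ r ∈ μ.toFinset, (μ.count r).factorial := by
    rw [Finset.prod_eq_multiset_prod]; rfl
  rw [this]
  apply Finset.prod_subset h
  intro x _ hx
  rw [Multiset.count_eq_zero_of_notMem (by simpa [Multiset.mem_toFinset] using hx)]
  rfl

lemma mfact_pos (μ : Multiset ℕ+) : 0 < mfact μ := by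
  rw [mfact_eq_prod μ μ.toFinset (subset_refl _)]
  exact Finset.prod_pos fun r _ => Nat.factorial_pos _

lemma count_powerset (T : Finset ℕ+) : ∀ (α ν : Multiset ℕ+), α.toFinset ⊆ T → ν.toFinset ⊆ T →
    α.powerset.count ν = ∏ r ∈ T, (α.count r).choose (ν.count r) := by
  intro α
  induction α using Multiset.induction with
  | empty =>
    intro ν _ hν
    by_cases h : ν = 0
    · subst h; simp
    · obtain ⟨a, ha⟩ := Multiset.exists_mem_of_ne_zero h
      rw [Finset.prod_eq_zero (hν (Multiset.mem_toFinset.mpr ha))]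
      · rw [Multiset.powerset_zero, Multiset.count_singleton]
        simp [h]
      · simp [Nat.choose_eq_zero_of_lt, Multiset.count_pos.mpr ha]
  | cons a s IH =>
    intro ν hα hν
    have haT : a ∈ T := hα (Multiset.mem_toFinset.mpr (Multiset.mem_cons_self a s))
    have hsT : s.toFinset ⊆ T := fun x hx =>
      hα (by rw [Multiset.mem_toFinset] at hx ⊢; exact Multiset.mem_cons_of_mem hx)
    rw [Multiset.powerset_cons, Multiset.count_add]
    rw [← Finset.mul_prod_erase T _ haT]
    have hcount : ∀ r ∈ T.erase a,
        ((a ::ₘ s).count r).choose (ν.count r) = (s.count r).choose (ν.count r) := by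
      intro r hr
      rw [Multiset.count_cons_of_ne (Finset.ne_of_mem_erase hr)]
    by_cases hmem : a ∈ ν
    · have hν' : (ν.erase a).toFinset ⊆ T := fun x hx => hν (by
        rw [Multiset.mem_toFinset] at hx ⊢; exact Multiset.mem_of_mem_erase hx)
      have h2 : (s.powerset.map (a ::ₘ ·)).count ν = s.powerset.count (ν.erase a) := by
        conv_lhs => rw [← Multiset.cons_erase hmem]
        exact Multiset.count_map_eq_count' _ _ (fun x y h => by simpa using h) _
      rw [h2, IH ν hsT hν, IH (ν.erase a) hsT hν']
      rw [← Finset.mul_prod_erase T (fun r => (s.count r).choose (ν.count r)) haT,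
        ← Finset.mul_prod_erase T (fun r => (s.count r).choose ((ν.erase a).count r)) haT]
      have hpe : ∏ r ∈ T.erase a, (s.count r).choose ((ν.erase a).count r)
          = ∏ r ∈ T.erase a, (s.count r).choose (ν.count r) := by
        apply Finset.prod_congr rfl
        intro r hr
        rw [Multiset.count_erase_of_ne (Finset.ne_of_mem_erase hr)]
      rw [hpe, Finset.prod_congr rfl hcount, ← add_mul]
      congr 1
      rw [Multiset.count_cons_self, Multiset.count_erase_self]
      obtain ⟨k, hk⟩ : ∃ k, ν.count a = k + 1 :=
        ⟨ν.count a - 1, (Nat.succ_pred_eq_of_pos (Multiset.count_pos.mpr hmem)).symm⟩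
      rw [hk]
      simp [Nat.choose_succ_succ, Nat.add_comm]
    · have h2 : (s.powerset.map (a ::ₘ ·)).count ν = 0 := by
        rw [Multiset.count_eq_zero]
        intro hc
        obtain ⟨τ, _, rfl⟩ := Multiset.mem_map.mp hc
        exact hmem (Multiset.mem_cons_self a τ)
      rw [h2, IH ν hsT hν, Nat.add_zero,
        ← Finset.mul_prod_erase T (fun r => (s.count r).choose (ν.count r)) haT,
        Finset.prod_congr rfl hcount]
      congr 1
      rw [Multiset.count_cons_self, Multiset.count_eq_zero_of_notMem hmem]
      simp

lemma mfact_mul_of_le {α ν : Multiset ℕ+} (h : ν ≤ α) :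
    mfact α = α.powerset.count ν * (mfact ν * mfact (α - ν)) := by
  have hνT : ν.toFinset ⊆ α.toFinset := fun x hx => by
    rw [Multiset.mem_toFinset] at hx ⊢; exact Multiset.mem_of_le h hx
  have hsT : (α - ν).toFinset ⊆ α.toFinset := fun x hx => by
    rw [Multiset.mem_toFinset] at hx ⊢; exact Multiset.mem_of_le (Multiset.sub_le_self _ _) hx
  rw [count_powerset α.toFinset α ν (subset_refl _) hνT,
    mfact_eq_prod α α.toFinset (subset_refl _), mfact_eq_prod ν α.toFinset hνT,
    mfact_eq_prod (α - ν) α.toFinset hsT, ← Finset.prod_mul_distrib, ← Finset.prod_mul_distrib]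
  apply Finset.prod_congr rfl
  intro r _
  have hle : ν.count r ≤ α.count r := Multiset.le_iff_count.mp h r
  rw [Multiset.count_sub, ← Nat.choose_mul_factorial_mul_factorial hle, mul_assoc]

lemma coef_identity (hq0 : ∀ μ : Multiset ℕ+, (mfact μ : F) ≠ 0) {α ν : Multiset ℕ+} (h : ν ≤ α) :
    (mfact α : F)⁻¹ * (α.powerset.count ν : F) = (mfact ν : F)⁻¹ * (mfact (α - ν) : F)⁻¹ := by
  have hc : (mfact α : F) = (α.powerset.count ν : F) * ((mfact ν : F) * (mfact (α - ν) : F)) := by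
    rw [mfact_mul_of_le h]; push_cast; ring
  have hcnt : (α.powerset.count ν : F) ≠ 0 := by
    have hm : ν ∈ α.powerset := Multiset.mem_powerset.mpr h
    exact Nat.cast_ne_zero.mpr (Multiset.count_ne_zero.mpr hm)
  rw [hc, mul_inv, mul_inv, mul_comm ((α.powerset.count ν : F))⁻¹, mul_assoc,
    inv_mul_cancel₀ hcnt, mul_one]

/-- Bespoke scalar lemmas for `Module.End F (PP F ⊗[F] PP F)` (avoids instance-path
mismatches in `rw`). -/
lemma endSmul_sub (c : F) (X Y : Module.End F (PP F ⊗[F] PP F)) :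
    c • (X - Y) = c • X - c • Y := smul_sub c X Y

lemma endSmul_smul (c d : F) (X : Module.End F (PP F ⊗[F] PP F)) :
    c • d • X = (c * d) • X := smul_smul c d X

lemma endSmul_comm (c d : F) (X : Module.End F (PP F ⊗[F] PP F)) :
    c • d • X = d • c • X := smul_comm c d X

lemma endSmul_mul (c : F) (X Y : Module.End F (PP F ⊗[F] PP F)) :
    (c • X) * Y = c • (X * Y) := smul_mul_assoc c X Y

lemma endMul_smul (c : F) (X Y : Module.End F (PP F ⊗[F] PP F)) :
    X * (c • Y) = c • (X * Y) := mul_smul_comm c X Y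

lemma endSmul_mul_smul (c d : F) (X Y : Module.End F (PP F ⊗[F] PP F)) :
    (c • X) * (d • Y) = (c * d) • (X * Y) := smul_mul_smul_comm c X d Y

lemma endSmul_sum (c : F) (s : Finset (Multiset ℕ+)) (f : Multiset ℕ+ → Module.End F (PP F ⊗[F] PP F)) :
    c • ∑ x ∈ s, f x = ∑ x ∈ s, c • f x := Finset.smul_sum

lemma endNeg_smul (c : F) (X : Module.End F (PP F ⊗[F] PP F)) :
    (-c) • X = -(c • X) := neg_smul c X

lemma endNsmul_eq (n : ℕ) (X : Module.End F (PP F ⊗[F] PP F)) :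
    n • X = (n : F) • X := (Nat.cast_smul_eq_nsmul F n X).symm

lemma key_expansion (hq : q ≠ 0) (A : ℕ+ → Module.End F (PP F))
    (hA : ∀ i j, Commute (A i) (A j))
    (C : ℕ+ → Module.End F (PP F ⊗[F] PP F))
    (hC : ∀ i j, Commute (C i) (C j))
    (hCdef : ∀ r, C r = (q⁻¹) ^ (r : ℕ) • op1 F (A r) - op2 F (A r))
    (α : Multiset ℕ+) :
    q ^ msum α • ((mfact α : F))⁻¹ • opProd C hC α =
      ∑ μ ∈ α.powerset.toFinset,
        (((-1 : F) ^ Multiset.card (α - μ)) * q ^ msum (α - μ)) •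
          (op1 F ((mfact μ : F)⁻¹ • opProd A hA μ) *
            op2 F ((mfact (α - μ) : F)⁻¹ • opProd A hA (α - μ))) := by
  classical
  have hmf : ∀ μ : Multiset ℕ+, (mfact μ : F) ≠ 0 := fun μ =>
    Nat.cast_ne_zero.mpr (mfact_pos μ).ne'
  set f : ℕ+ → Module.End F (PP F ⊗[F] PP F) := fun r => op1 F (A r) with hfdef
  set g : ℕ+ → Module.End F (PP F ⊗[F] PP F) := fun r => (-(q ^ (r : ℕ))) • op2 F (A r)
    with hgdef
  have hff : ∀ i j, Commute (f i) (f j) := fun i j => op1_commute F (hA i j)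
  have hgg : ∀ i j, Commute (g i) (g j) := fun i j =>
    ((op2_commute F (hA i j)).smul_left _).smul_right _
  have hfg : ∀ i j, Commute (f i) (g j) := fun i j =>
    (op1_op2_commute F (A i) (A j)).smul_right _
  have hsum : ∀ i j, Commute (f i + g i) (f j + g j) := fun i j =>
    ((hff i j).add_right (hfg i j)).add_left ((hfg j i).symm.add_right (hgg i j))
  have hqC : ∀ r : ℕ+, q ^ (r : ℕ) • C r = f r + g r := by
    intro r
    rw [hCdef r, hfdef, hgdef, endSmul_sub F, endSmul_smul F, ← mul_pow,
      mul_inv_cancel₀ hq, one_pow, one_smul]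
    exact (sub_eq_add_neg _ _).trans
      (congrArg (fun z => op1 F (A r) + z) (neg_smul (q ^ (r : ℕ)) (op2 F (A r))).symm)
  have hcf : ∀ i j : ℕ+, Commute ((fun r : ℕ+ => q ^ (r : ℕ)) i • C i)
      ((fun r : ℕ+ => q ^ (r : ℕ)) j • C j) :=
    fun i j => ((hC i j).smul_left _).smul_right _
  have hstep : q ^ msum α • opProd C hC α =
      (α.powerset.map fun ν => opProd f hff ν * opProd g hgg (α - ν)).sum := by
    rw [← prod_map_pow F q α,
      ← opProd_smul (fun r : ℕ+ => q ^ (r : ℕ)) C hC hcf α,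
      opProd_congr _ _ hqC hcf hsum, opProd_add f g hff hgg hfg hsum α]
  rw [endSmul_comm F, hstep, Finset.sum_multiset_map_count, endSmul_sum F]
  apply Finset.sum_congr rfl
  intro ν hν
  have hle : ν ≤ α := Multiset.mem_powerset.mp (Multiset.mem_toFinset.mp hν)
  have hgρ : opProd g hgg (α - ν) =
      ((-1 : F) ^ Multiset.card (α - ν) * q ^ msum (α - ν)) • op2 F (opProd A hA (α - ν)) := by
    rw [opProd_smul (fun r : ℕ+ => -(q ^ (r : ℕ))) (fun r => op2 F (A r))
        (fun i j => op2_commute F (hA i j)) hgg (α - ν),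
      prod_map_neg_pow F q, op2_opProd]
  have hfν : opProd f hff ν = op1 F (opProd A hA ν) := (op1_opProd F A hA ν).symm
  rw [endNsmul_eq F, hfν, hgρ, endMul_smul F, endSmul_smul F, endSmul_smul F,
    op1_smul F, op2_smul F, endSmul_mul_smul F, endSmul_smul F]
  congr 1
  have hcoef := coef_identity F hmf hle
  linear_combination ((-1 : F) ^ Multiset.card (α - ν) * q ^ msum (α - ν)) * hcoef

lemma pair_identity (hq : q ≠ 0) (κ : ℕ+ → F) (α β : Multiset ℕ+) :
    ∑ μ ∈ α.powerset.toFinset, ∑ ν ∈ β.powerset.toFinset,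
        (((-1 : F) ^ (Multiset.card (α - μ) + Multiset.card (β - ν))) *
            q ^ (msum (α - μ) + msum (β - ν))) •
          (TensorProduct.map (aStar F μ * aLow F κ ν) (aStar F (α - μ) * aLow F κ (β - ν)) :
            Module.End F (PP F ⊗[F] PP F)) =
      q ^ (msum α + msum β) • (cStar F q α * cLow F q κ β) := by
  classical
  have hA : q ^ msum α • cStar F q α =
      ∑ μ ∈ α.powerset.toFinset,
        (((-1 : F) ^ Multiset.card (α - μ)) * q ^ msum (α - μ)) •
          (op1 F (aStar F μ) * op2 F (aStar F (α - μ))) :=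
    key_expansion F q hq (aNeg F) (aNeg_commute F) (cNeg F q) (cNeg_commute F q)
      (fun r => rfl) α
  have hB : q ^ msum β • cLow F q κ β =
      ∑ ν ∈ β.powerset.toFinset,
        (((-1 : F) ^ Multiset.card (β - ν)) * q ^ msum (β - ν)) •
          (op1 F (aLow F κ ν) * op2 F (aLow F κ (β - ν))) :=
    key_expansion F q hq (aPos F κ) (aPos_commute F κ) (cPos F q κ) (cPos_commute F q κ)
      (fun r => rfl) β
  have hswap : ∀ S R L T : Module.End F (PP F),
      (op1 F S * op2 F R) * (op1 F L * op2 F T) = TensorProduct.map (S * L) (R * T) := by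
    intro S R L T
    rw [← op1_mul_op2, op1_mul, op2_mul]
    calc op1 F S * op2 F R * (op1 F L * op2 F T)
        = op1 F S * (op2 F R * op1 F L) * op2 F T := by noncomm_ring
      _ = op1 F S * (op1 F L * op2 F R) * op2 F T := by
          rw [← (op1_op2_commute F L R).eq]
      _ = op1 F S * op1 F L * (op2 F R * op2 F T) := by noncomm_ring
  have hrhs : q ^ (msum α + msum β) • (cStar F q α * cLow F q κ β) =
      (q ^ msum α • cStar F q α) * (q ^ msum β • cLow F q κ β) := by
    rw [endSmul_mul F, endMul_smul F, endSmul_smul F, ← pow_add]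
  rw [hrhs, hA, hB, Finset.sum_mul_sum]
  apply Finset.sum_congr rfl
  intro μ _
  apply Finset.sum_congr rfl
  intro ν _
  rw [endSmul_mul_smul F, hswap]
  congr 1
  rw [pow_add, pow_add]
  ring

/-- Proposition 4.3 of the paper, finite-support form: for a finitely
supported family `G(μ,ν)`, setting
`F(μ,ρ,ν,σ) := (−1)^{ℓ(ρ)+ℓ(σ)} q^{|ρ|+|σ|} G(μ∪ρ, ν∪σ)` one has
`∑_{μ,ρ,ν,σ} F(μ,ρ,ν,σ) (a*_μ ∘ a_ν) ⊗ (a*_ρ ∘ a_σ) = ∑_{μ,ν} q^{|μ|+|ν|} G(μ,ν) c*_μ ∘ c_ν`.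
The left-hand side is organized as a sum over `(α,β)` in the support of `G` and over the
decompositions `α = μ ∪ ρ` (with `μ ⊆ α`, `ρ = α∖μ`) and `β = ν ∪ σ`. -/
theorem statement8 (F : Type*) [Field F] [CharZero F] (q : F) (hq : q ≠ 0)
    (κ : ℕ+ → F) (G : (Multiset ℕ+ × Multiset ℕ+) →₀ F) :
    (G.sum fun p g =>
      ∑ μ ∈ p.1.powerset.toFinset, ∑ ν ∈ p.2.powerset.toFinset,
        (((-1 : F) ^ (Multiset.card (p.1 - μ) + Multiset.card (p.2 - ν))) *
            q ^ (msum (p.1 - μ) + msum (p.2 - ν)) * g) •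
          (TensorProduct.map (aStar F μ * aLow F κ ν)
              (aStar F (p.1 - μ) * aLow F κ (p.2 - ν)) :
            Module.End F (PP F ⊗[F] PP F))) =
    G.sum fun p g =>
      (q ^ (msum p.1 + msum p.2) * g) • (cStar F q p.1 * cLow F q κ p.2) := by
  classical
  apply Finsupp.sum_congr
  intro p _
  have hper : ∀ (c : F) (T : Module.End F (PP F ⊗[F] PP F)), (c * G p) • T = G p • c • T := by
    intro c T
    rw [mul_comm]
    exact mul_smul (G p) c T
  simp only [hper, ← endSmul_sum F]
  exact congrArg (fun z => G p • z) (pair_identity F q hq κ p.1 p.2)
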